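/- For any n-vector d with d_i ≥ d_j > 0, the optimal scores satisfy f(d - δ_i) ≤ f(d - δ_j) and F(d - δ_i) ≥ F(d - δ_j), where f(d) = min_S max_G E[C(d,G,S)] and F(d) = max_S min_G E[C(d,G,S)]. -/

import Mathlib

open Finset

abbrev Deck (n : ℕ) := Fin n → ℕ
abbrev Strat (n : ℕ) := Deck n → Fin n → ℝ

/-- Remove one copy of card type `j` from the deck. -/
def Deck.sub {n : ℕ} (d : Deck n) (j : Fin n) : Deck n :=
  fun i => if i = j then d i - 1 else d i

/-- `p` is a probability distribution on `Fin n`. -/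
def IsDist {n : ℕ} (p : Fin n → ℝ) : Prop :=
  (∀ i, 0 ≤ p i) ∧ ∑ i, p i = 1

/-- A Guesser strategy outputs a distribution on card types for each nonzero deck. -/
def IsGuesser {n : ℕ} (G : Strat n) : Prop :=
  ∀ d : Deck n, d ≠ 0 → IsDist (G d)

/-- A Shuffler strategy outputs a distribution supported on the support of the deck. -/
def IsShuffler {n : ℕ} (S : Strat n) : Prop :=
  ∀ d : Deck n, d ≠ 0 → IsDist (S d) ∧ ∀ i, S d i ≠ 0 → d i ≠ 0

/-- Expected score of the game, computed with fuel `N` (the number of cards). -/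
def scoreAux {n : ℕ} (G S : Strat n) : ℕ → Deck n → ℝ
  | 0, _ => 0
  | N + 1, d => ∑ j ∈ Finset.univ.filter (fun j => d j ≠ 0),
      S d j * (G d j + scoreAux G S N (d.sub j))

/-- The expected score `E[C(d,G,S)]`. -/
noncomputable def score {n : ℕ} (G S : Strat n) (d : Deck n) : ℝ :=
  scoreAux G S (∑ i, d i) d

/-- `f(d,S)`: maximum expected score over all Guesser strategies. -/
noncomputable def fval {n : ℕ} (S : Strat n) (d : Deck n) : ℝ :=
  sSup {x | ∃ G, IsGuesser G ∧ score G S d = x}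

/-- `F(d,S)`: minimum expected score over all Guesser strategies. -/
noncomputable def Fval {n : ℕ} (S : Strat n) (d : Deck n) : ℝ :=
  sInf {x | ∃ G, IsGuesser G ∧ score G S d = x}

/-- `f(d) = min_S f(d,S)`. -/
noncomputable def fopt {n : ℕ} (d : Deck n) : ℝ :=
  sInf {x | ∃ S, IsShuffler S ∧ fval S d = x}

/-- `F(d) = max_S F(d,S)`. -/
noncomputable def Fopt {n : ℕ} (d : Deck n) : ℝ :=
  sSup {x | ∃ S, IsShuffler S ∧ Fval S d = x}

/-- The greedy Shuffler strategy: uniform on the support of the deck. -/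
noncomputable def greedy {n : ℕ} : Strat n :=
  fun d i => if d i ≠ 0 then ((Finset.univ.filter fun j => d j ≠ 0).card : ℝ)⁻¹ else 0

namespace CG

variable {n : ℕ}

/-- support of a deck -/
def suppF (e : Deck n) : Finset (Fin n) := univ.filter (fun k => e k ≠ 0)

lemma mem_suppF {e : Deck n} {k : Fin n} : k ∈ suppF e ↔ e k ≠ 0 := by
  simp [suppF]

lemma deck_ne_zero_iff {e : Deck n} : e ≠ 0 ↔ ∃ i, e i ≠ 0 := by
  constructor
  · intro h
    by_contra hc
    push_neg at hc
    exact h (funext fun i => hc i)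
  · rintro ⟨i, hi⟩ h
    exact hi (by simp [h])

lemma total_pos {e : Deck n} (h : e ≠ 0) : 0 < ∑ i, e i := by
  obtain ⟨i, hi⟩ := deck_ne_zero_iff.mp h
  exact Finset.sum_pos' (fun _ _ => Nat.zero_le _) ⟨i, mem_univ i, Nat.pos_of_ne_zero hi⟩

lemma sub_total {e : Deck n} {j : Fin n} (h : e j ≠ 0) :
    ∑ i, (e.sub j) i + 1 = ∑ i, e i := by
  have h1 : ∑ i, (e.sub j) i = (e j - 1) + ∑ i ∈ univ.erase j, e i := by
    rw [← Finset.add_sum_erase _ _ (mem_univ j)]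
    congr 1
    · simp [Deck.sub]
    · exact Finset.sum_congr rfl fun i hi => by
        simp [Deck.sub, Finset.ne_of_mem_erase hi]
  have h2 : ∑ i, e i = e j + ∑ i ∈ univ.erase j, e i :=
    (Finset.add_sum_erase _ _ (mem_univ j)).symm
  omega

lemma score_zero (G S : Strat n) : score G S 0 = 0 := by
  have : ∑ i, (0 : Deck n) i = 0 := by simp
  rw [score, this, scoreAux]

lemma score_rec (G S : Strat n) {e : Deck n} (h : e ≠ 0) :
    score G S e = ∑ j ∈ suppF e, S e j * (G e j + score G S (e.sub j)) := by
  obtain ⟨N, hN⟩ : ∃ N, ∑ i, e i = N + 1 :=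
    ⟨(∑ i, e i) - 1, by have := total_pos h; omega⟩
  rw [score, hN, scoreAux]
  refine Finset.sum_congr rfl fun j hj => ?_
  rw [mem_suppF] at hj
  have : ∑ i, (e.sub j) i = N := by have := sub_total hj; omega
  rw [score, this]

section NZ
variable [NeZero n]

noncomputable def argmaxS (S : Strat n) (e : Deck n) : Fin n :=
  (Finset.exists_max_image univ (S e) univ_nonempty).choose

lemma argmaxS_spec (S : Strat n) (e : Deck n) (k : Fin n) : S e k ≤ S e (argmaxS S e) :=
  (Finset.exists_max_image univ (S e) univ_nonempty).choose_spec.2 k (mem_univ k)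

noncomputable def argminS (S : Strat n) (e : Deck n) : Fin n :=
  (Finset.exists_min_image univ (S e) univ_nonempty).choose

lemma argminS_spec (S : Strat n) (e : Deck n) (k : Fin n) : S e (argminS S e) ≤ S e k :=
  (Finset.exists_min_image univ (S e) univ_nonempty).choose_spec.2 k (mem_univ k)

noncomputable def bG (S : Strat n) : Strat n := fun e k => if k = argmaxS S e then 1 else 0

noncomputable def wG (S : Strat n) : Strat n := fun e k => if k = argminS S e then 1 else 0

lemma isDist_single (k0 : Fin n) : IsDist (fun k => if k = k0 then (1:ℝ) else 0) := by
  constructor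
  · intro i; positivity
  · simp

lemma isGuesser_bG (S : Strat n) : IsGuesser (bG S) := fun e _ => isDist_single _

lemma isGuesser_wG (S : Strat n) : IsGuesser (wG S) := fun e _ => isDist_single _

/-- For a shuffler, sums over the support can be extended to all of `univ`. -/
lemma sum_supp_eq {S : Strat n} (hS : IsShuffler S) {e : Deck n} (h : e ≠ 0) (f : Fin n → ℝ) :
    ∑ k ∈ suppF e, S e k * f k = ∑ k, S e k * f k := by
  apply Finset.sum_subset (Finset.subset_univ _)
  intro k _ hk
  rw [mem_suppF] at hk
  push_neg at hk
  have : S e k = 0 := by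
    by_contra hc
    exact ((hS e h).2 k hc) hk
  rw [this, zero_mul]

lemma bG_term {S : Strat n} (hS : IsShuffler S) {e : Deck n} (h : e ≠ 0) :
    ∑ k ∈ suppF e, S e k * bG S e k = S e (argmaxS S e) := by
  rw [sum_supp_eq hS h]
  simp [bG, mul_ite]

lemma wG_term {S : Strat n} (hS : IsShuffler S) {e : Deck n} (h : e ≠ 0) :
    ∑ k ∈ suppF e, S e k * wG S e k = S e (argminS S e) := by
  rw [sum_supp_eq hS h]
  simp [wG, mul_ite]

lemma guess_term_le {S : Strat n} (hS : IsShuffler S) {G : Strat n} (hG : IsGuesser G)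
    {e : Deck n} (h : e ≠ 0) :
    ∑ k ∈ suppF e, S e k * G e k ≤ S e (argmaxS S e) := by
  have hGd := hG e h
  have hSd := (hS e h).1
  calc ∑ k ∈ suppF e, S e k * G e k
      ≤ ∑ k ∈ suppF e, S e (argmaxS S e) * G e k := by
        refine Finset.sum_le_sum fun k _ => ?_
        exact mul_le_mul_of_nonneg_right (argmaxS_spec S e k) (hGd.1 k)
    _ = S e (argmaxS S e) * ∑ k ∈ suppF e, G e k := by rw [Finset.mul_sum]
    _ ≤ S e (argmaxS S e) * 1 := by
        refine mul_le_mul_of_nonneg_left ?_ (hSd.1 (argmaxS S e))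
        have h1 : ∑ k ∈ suppF e, G e k ≤ ∑ k, G e k :=
          Finset.sum_le_sum_of_subset_of_nonneg (Finset.subset_univ _)
            (fun k _ _ => hGd.1 k)
        rw [hGd.2] at h1
        exact h1
    _ = S e (argmaxS S e) := mul_one _

lemma guess_term_ge {S : Strat n} (hS : IsShuffler S) {G : Strat n} (hG : IsGuesser G)
    {e : Deck n} (h : e ≠ 0) :
    S e (argminS S e) ≤ ∑ k ∈ suppF e, S e k * G e k := by
  have hGd := hG e h
  rw [sum_supp_eq hS h]
  calc S e (argminS S e) = S e (argminS S e) * ∑ k, G e k := by rw [hGd.2, mul_one]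
    _ = ∑ k, S e (argminS S e) * G e k := by rw [Finset.mul_sum]
    _ ≤ ∑ k, S e k * G e k := by
        refine Finset.sum_le_sum fun k _ => ?_
        exact mul_le_mul_of_nonneg_right (argminS_spec S e k) (hGd.1 k)

lemma score_le_bG {S : Strat n} (hS : IsShuffler S) {G : Strat n} (hG : IsGuesser G) :
    ∀ (N : ℕ) (e : Deck n), ∑ i, e i = N → score G S e ≤ score (bG S) S e := by
  intro N
  induction N using Nat.strong_induction_on with
  | _ N IH =>
    intro e hN
    by_cases h : e = 0
    · subst h; rw [score_zero, score_zero]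
    · rw [score_rec _ _ h, score_rec _ _ h]
      have expand : ∀ G' : Strat n,
          ∑ j ∈ suppF e, S e j * (G' e j + score G' S (e.sub j)) =
          (∑ j ∈ suppF e, S e j * G' e j) + ∑ j ∈ suppF e, S e j * score G' S (e.sub j) := by
        intro G'
        rw [← Finset.sum_add_distrib]
        exact Finset.sum_congr rfl fun j _ => by ring
      rw [expand G, expand (bG S)]
      refine add_le_add ((guess_term_le hS hG h).trans_eq (bG_term hS h).symm) ?_
      refine Finset.sum_le_sum fun j hj => ?_
      rw [mem_suppF] at hj
      have hlt : ∑ i, (e.sub j) i < N := by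
        have := sub_total hj
        omega
      exact mul_le_mul_of_nonneg_left (IH _ hlt _ rfl) ((hS e h).1.1 j)

lemma wG_le_score {S : Strat n} (hS : IsShuffler S) {G : Strat n} (hG : IsGuesser G) :
    ∀ (N : ℕ) (e : Deck n), ∑ i, e i = N → score (wG S) S e ≤ score G S e := by
  intro N
  induction N using Nat.strong_induction_on with
  | _ N IH =>
    intro e hN
    by_cases h : e = 0
    · subst h; rw [score_zero, score_zero]
    · rw [score_rec _ _ h, score_rec _ _ h]
      have expand : ∀ G' : Strat n,
          ∑ j ∈ suppF e, S e j * (G' e j + score G' S (e.sub j)) =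
          (∑ j ∈ suppF e, S e j * G' e j) + ∑ j ∈ suppF e, S e j * score G' S (e.sub j) := by
        intro G'
        rw [← Finset.sum_add_distrib]
        exact Finset.sum_congr rfl fun j _ => by ring
      rw [expand G, expand (wG S)]
      refine add_le_add ((wG_term hS h).le.trans (guess_term_ge hS hG h)) ?_
      refine Finset.sum_le_sum fun j hj => ?_
      rw [mem_suppF] at hj
      have hlt : ∑ i, (e.sub j) i < N := by
        have := sub_total hj
        omega
      exact mul_le_mul_of_nonneg_left (IH _ hlt _ rfl) ((hS e h).1.1 j)

lemma fval_eq_bG {S : Strat n} (hS : IsShuffler S) (e : Deck n) :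
    fval S e = score (bG S) S e := by
  refine le_antisymm ?_ ?_
  · refine csSup_le ⟨score (bG S) S e, bG S, isGuesser_bG S, rfl⟩ ?_
    rintro x ⟨G, hG, rfl⟩
    exact score_le_bG hS hG _ e rfl
  · refine le_csSup ⟨score (bG S) S e, ?_⟩ ⟨bG S, isGuesser_bG S, rfl⟩
    rintro x ⟨G, hG, rfl⟩
    exact score_le_bG hS hG _ e rfl

lemma Fval_eq_wG {S : Strat n} (hS : IsShuffler S) (e : Deck n) :
    Fval S e = score (wG S) S e := by
  refine le_antisymm ?_ ?_
  · refine csInf_le ⟨score (wG S) S e, ?_⟩ ⟨wG S, isGuesser_wG S, rfl⟩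
    rintro x ⟨G, hG, rfl⟩
    exact wG_le_score hS hG _ e rfl
  · refine le_csInf ⟨score (wG S) S e, wG S, isGuesser_wG S, rfl⟩ ?_
    rintro x ⟨G, hG, rfl⟩
    exact wG_le_score hS hG _ e rfl

end NZ

lemma isShuffler_greedy : IsShuffler (greedy (n := n)) := by
  intro e he
  obtain ⟨i, hi⟩ := deck_ne_zero_iff.mp he
  have hne : (suppF e).Nonempty := ⟨i, mem_suppF.mpr hi⟩
  have hc : ((suppF e).card : ℝ) ≠ 0 := by
    have : 0 < (suppF e).card := Finset.card_pos.mpr hne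
    exact_mod_cast this.ne'
  refine ⟨⟨fun k => ?_, ?_⟩, fun k hk => ?_⟩
  · unfold greedy
    split <;> positivity
  · show ∑ k, (if e k ≠ 0 then ((suppF e).card : ℝ)⁻¹ else 0) = 1
    rw [← Finset.sum_filter]
    show ∑ _k ∈ suppF e, ((suppF e).card : ℝ)⁻¹ = 1
    rw [Finset.sum_const, nsmul_eq_mul, mul_inv_cancel₀ hc]
  · by_contra hc2
    apply hk
    unfold greedy
    simp [hc2]

lemma dist_sum_supp {p : Fin n → ℝ} (hp : IsDist p) {e : Deck n}
    (hsupp : ∀ k, p k ≠ 0 → e k ≠ 0) : ∑ k ∈ suppF e, p k = 1 := by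
  rw [← hp.2]
  apply Finset.sum_subset (Finset.subset_univ _)
  intro k _ hk
  rw [mem_suppF] at hk
  push_neg at hk
  by_contra hne
  exact hsupp k hne hk

section NZ2
variable [NeZero n]

lemma argmax_eq_sup' (S : Strat n) (e : Deck n) :
    S e (argmaxS S e) = univ.sup' univ_nonempty (S e) :=
  le_antisymm (Finset.le_sup' _ (mem_univ _)) (Finset.sup'_le _ _ fun k _ => argmaxS_spec S e k)

lemma argmin_eq_inf' (S : Strat n) (e : Deck n) :
    S e (argminS S e) = univ.inf' univ_nonempty (S e) :=
  le_antisymm (Finset.le_inf' _ _ fun k _ => argminS_spec S e k) (Finset.inf'_le _ (mem_univ _))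

noncomputable def Vf (e : Deck n) : ℝ :=
  if _h0 : e = 0 then 0
  else sInf {x | ∃ p : Fin n → ℝ, IsDist p ∧ (∀ k, p k ≠ 0 → e k ≠ 0) ∧
    univ.sup' univ_nonempty p + ∑ k ∈ (suppF e).attach, p k.1 * Vf (e.sub k.1) = x}
termination_by ∑ i, e i
decreasing_by
  have hk := mem_suppF.mp k.2
  have := sub_total hk
  omega

def VSet (e : Deck n) : Set ℝ := {x | ∃ p : Fin n → ℝ, IsDist p ∧ (∀ k, p k ≠ 0 → e k ≠ 0) ∧
    univ.sup' univ_nonempty p + ∑ k ∈ suppF e, p k * Vf (e.sub k) = x}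

lemma Vf_zero : Vf (0 : Deck n) = 0 := by rw [Vf, dif_pos rfl]

lemma Vf_eq {e : Deck n} (h : e ≠ 0) : Vf e = sInf (VSet e) := by
  rw [Vf, dif_neg h]
  have hsa : ∀ p : Fin n → ℝ,
      ∑ k ∈ (suppF e).attach, p k.1 * Vf (e.sub k.1) = ∑ k ∈ suppF e, p k * Vf (e.sub k) :=
    fun p => Finset.sum_attach (suppF e) (fun k => p k * Vf (e.sub k))
  congr 1
  ext x
  constructor
  · rintro ⟨p, h1, h2, h3⟩
    exact ⟨p, h1, h2, by rw [← h3, hsa]⟩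
  · rintro ⟨p, h1, h2, h3⟩
    exact ⟨p, h1, h2, by rw [← h3, hsa]⟩

lemma VSet_nonempty {e : Deck n} (h : e ≠ 0) : (VSet e).Nonempty :=
  ⟨_, greedy e, (isShuffler_greedy e h).1, (isShuffler_greedy e h).2, rfl⟩

lemma Vf_nonneg : ∀ (N : ℕ) (e : Deck n), ∑ i, e i = N → 0 ≤ Vf e := by
  intro N
  induction N using Nat.strong_induction_on with
  | _ N IH =>
    intro e hN
    by_cases h : e = 0
    · subst h; rw [Vf_zero]
    · rw [Vf_eq h]
      refine le_csInf (VSet_nonempty h) ?_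
      rintro x ⟨p, hp, hsupp, rfl⟩
      have h1 : (0:ℝ) ≤ univ.sup' univ_nonempty p :=
        (hp.1 (Classical.arbitrary _)).trans (Finset.le_sup' p (mem_univ _))
      refine add_nonneg h1 (Finset.sum_nonneg fun k hk => ?_)
      rw [mem_suppF] at hk
      have hlt : ∑ i, (e.sub k) i < N := by have := sub_total hk; omega
      exact mul_nonneg (hp.1 k) (IH _ hlt _ rfl)

lemma Vf_nonneg' (e : Deck n) : 0 ≤ Vf e := Vf_nonneg _ e rfl

lemma VSet_elt_nonneg {e : Deck n} {x : ℝ} (hx : x ∈ VSet e) : 0 ≤ x := by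
  obtain ⟨p, hp, hsupp, rfl⟩ := hx
  have h1 : (0:ℝ) ≤ univ.sup' univ_nonempty p :=
    (hp.1 (Classical.arbitrary _)).trans (Finset.le_sup' p (mem_univ _))
  exact add_nonneg h1 (Finset.sum_nonneg fun k _ =>
    mul_nonneg (hp.1 k) (Vf_nonneg' _))

lemma VSet_bddBelow (e : Deck n) : BddBelow (VSet e) :=
  ⟨0, fun _ hx => VSet_elt_nonneg hx⟩

lemma Vf_le_fval {S : Strat n} (hS : IsShuffler S) :
    ∀ (N : ℕ) (e : Deck n), ∑ i, e i = N → Vf e ≤ fval S e := by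
  intro N
  induction N using Nat.strong_induction_on with
  | _ N IH =>
    intro e hN
    by_cases h : e = 0
    · subst h
      rw [Vf_zero, fval_eq_bG hS, score_zero]
    · rw [fval_eq_bG hS, score_rec _ _ h]
      have expand : ∑ j ∈ suppF e, S e j * (bG S e j + score (bG S) S (e.sub j)) =
          (∑ j ∈ suppF e, S e j * bG S e j) + ∑ j ∈ suppF e, S e j * score (bG S) S (e.sub j) := by
        rw [← Finset.sum_add_distrib]
        exact Finset.sum_congr rfl fun j _ => by ring
      rw [expand, bG_term hS h, argmax_eq_sup' S e]
      have step : univ.sup' univ_nonempty (S e) + ∑ j ∈ suppF e, S e j * Vf (e.sub j) ≤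
          univ.sup' univ_nonempty (S e) + ∑ j ∈ suppF e, S e j * score (bG S) S (e.sub j) := by
        refine add_le_add_right (Finset.sum_le_sum fun j hj => ?_) _
        rw [mem_suppF] at hj
        have hlt : ∑ i, (e.sub j) i < N := by have := sub_total hj; omega
        have h2 := IH _ hlt (e.sub j) rfl
        rw [fval_eq_bG hS] at h2
        exact mul_le_mul_of_nonneg_left h2 ((hS e h).1.1 j)
      refine le_trans ?_ step
      rw [Vf_eq h]
      exact csInf_le (VSet_bddBelow e) ⟨S e, (hS e h).1, (hS e h).2, rfl⟩

open scoped Classical in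
noncomputable def nearS (ε : ℝ) : Strat n := fun e =>
  if h : ∃ p : Fin n → ℝ, IsDist p ∧ (∀ k, p k ≠ 0 → e k ≠ 0) ∧
      univ.sup' univ_nonempty p + ∑ k ∈ suppF e, p k * Vf (e.sub k) < Vf e + ε
  then h.choose else greedy e

lemma nearS_ex {ε : ℝ} (hε : 0 < ε) {e : Deck n} (h : e ≠ 0) :
    ∃ p : Fin n → ℝ, IsDist p ∧ (∀ k, p k ≠ 0 → e k ≠ 0) ∧
      univ.sup' univ_nonempty p + ∑ k ∈ suppF e, p k * Vf (e.sub k) < Vf e + ε := by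
  have h1 : sInf (VSet e) < Vf e + ε := by
    rw [← Vf_eq h]; exact lt_add_of_pos_right _ hε
  obtain ⟨x, ⟨p, hp, hsupp, rfl⟩, hlt⟩ := exists_lt_of_csInf_lt (VSet_nonempty h) h1
  exact ⟨p, hp, hsupp, hlt⟩

lemma nearS_spec {ε : ℝ} (hε : 0 < ε) {e : Deck n} (h : e ≠ 0) :
    IsDist (nearS ε e) ∧ (∀ k, nearS ε e k ≠ 0 → e k ≠ 0) ∧
      univ.sup' univ_nonempty (nearS ε e) +
        ∑ k ∈ suppF e, nearS ε e k * Vf (e.sub k) < Vf e + ε := by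
  classical
  have hex := nearS_ex hε h
  unfold nearS
  rw [dif_pos hex]
  exact hex.choose_spec

lemma isShuffler_nearS {ε : ℝ} (hε : 0 < ε) : IsShuffler (nearS (n := n) ε) := by
  intro e he
  obtain ⟨h1, h2, _⟩ := nearS_spec hε he
  exact ⟨h1, h2⟩

lemma fval_nearS {ε : ℝ} (hε : 0 < ε) :
    ∀ (N : ℕ) (e : Deck n), ∑ i, e i = N → fval (nearS ε) e ≤ Vf e + ε * N := by
  intro N
  induction N using Nat.strong_induction_on with
  | _ N IH =>
    intro e hN
    by_cases h : e = 0
    · subst h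
      rw [fval_eq_bG (isShuffler_nearS hε), score_zero]
      have : N = 0 := by rw [← hN]; simp
      subst this
      simpa using Vf_nonneg' (0 : Deck n)
    · obtain ⟨M, hM⟩ : ∃ M, N = M + 1 := ⟨N - 1, by have := total_pos h; omega⟩
      set S := nearS (n := n) ε with hSdef
      have hS : IsShuffler S := isShuffler_nearS hε
      obtain ⟨hdist, hsupp, hval⟩ := nearS_spec hε h
      rw [fval_eq_bG hS, score_rec _ _ h]
      have expand : ∑ j ∈ suppF e, S e j * (bG S e j + score (bG S) S (e.sub j)) =
          (∑ j ∈ suppF e, S e j * bG S e j) + ∑ j ∈ suppF e, S e j * score (bG S) S (e.sub j) := by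
        rw [← Finset.sum_add_distrib]
        exact Finset.sum_congr rfl fun j _ => by ring
      rw [expand, bG_term hS h, argmax_eq_sup' S e]
      have step : ∑ j ∈ suppF e, S e j * score (bG S) S (e.sub j) ≤
          ∑ j ∈ suppF e, S e j * (Vf (e.sub j) + ε * M) := by
        refine Finset.sum_le_sum fun j hj => ?_
        rw [mem_suppF] at hj
        have hlt : ∑ i, (e.sub j) i < N := by have := sub_total hj; omega
        have hMj : ∑ i, (e.sub j) i = M := by have := sub_total hj; omega
        have h2 := IH _ hlt (e.sub j) rfl
        rw [fval_eq_bG hS, hMj] at h2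
        exact mul_le_mul_of_nonneg_left h2 (hdist.1 j)
      have hsum1 : ∑ j ∈ suppF e, S e j = 1 := dist_sum_supp hdist hsupp
      have expand2 : ∑ j ∈ suppF e, S e j * (Vf (e.sub j) + ε * M) =
          (∑ j ∈ suppF e, S e j * Vf (e.sub j)) + ε * M := by
        have e1 : ∑ j ∈ suppF e, S e j * (Vf (e.sub j) + ε * M) =
            (∑ j ∈ suppF e, S e j * Vf (e.sub j)) +
              (∑ j ∈ suppF e, S e j) * (ε * M) := by
          rw [Finset.sum_mul, ← Finset.sum_add_distrib]
          exact Finset.sum_congr rfl fun j _ => by ring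
        rw [e1, hsum1, one_mul]
      have final : univ.sup' univ_nonempty (S e) + ∑ j ∈ suppF e, S e j * Vf (e.sub j)
          + ε * M ≤ Vf e + ε * N := by
        have : (N : ℝ) = (M : ℝ) + 1 := by rw [hM]; push_cast; ring
        rw [this]
        nlinarith [hval]
      calc univ.sup' univ_nonempty (S e) + ∑ j ∈ suppF e, S e j * score (bG S) S (e.sub j)
          ≤ univ.sup' univ_nonempty (S e) + ∑ j ∈ suppF e, S e j * (Vf (e.sub j) + ε * M) :=
            add_le_add_right step _
        _ = univ.sup' univ_nonempty (S e) + ∑ j ∈ suppF e, S e j * Vf (e.sub j) + ε * M := by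
            rw [expand2]; ring
        _ ≤ Vf e + ε * N := final

lemma fopt_eq_Vf (e : Deck n) : fopt e = Vf e := by
  have hbdd : BddBelow {x | ∃ S, IsShuffler S ∧ fval S e = x} :=
    ⟨Vf e, by rintro x ⟨S, hS, rfl⟩; exact Vf_le_fval hS _ e rfl⟩
  refine le_antisymm ?_ ?_
  · by_cases h : e = 0
    · subst h
      have h0 : fval greedy (0 : Deck n) = 0 := by
        rw [fval_eq_bG isShuffler_greedy, score_zero]
      rw [Vf_zero]
      calc fopt (0 : Deck n) ≤ fval greedy 0 :=
            csInf_le hbdd ⟨greedy, isShuffler_greedy, rfl⟩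
        _ = 0 := h0
    · refine le_of_forall_pos_le_add fun ε hε => ?_
      have hpos : (0:ℝ) < ((∑ i, e i : ℕ) : ℝ) := by exact_mod_cast total_pos h
      set ε' := ε / ((∑ i, e i : ℕ) : ℝ) with hε'def
      have hε' : 0 < ε' := div_pos hε hpos
      have h1 : fopt e ≤ fval (nearS ε') e :=
        csInf_le hbdd ⟨nearS ε', isShuffler_nearS hε', rfl⟩
      have h2 := fval_nearS hε' (∑ i, e i) e rfl
      have h3 : ε' * ((∑ i, e i : ℕ) : ℝ) = ε := by
        rw [hε'def, div_mul_cancel₀ _ hpos.ne']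
      calc fopt e ≤ Vf e + ε' * ((∑ i, e i : ℕ) : ℝ) := h1.trans h2
        _ = Vf e + ε := by rw [h3]
  · refine le_csInf ⟨fval greedy e, greedy, isShuffler_greedy, rfl⟩ ?_
    rintro x ⟨S, hS, rfl⟩
    exact Vf_le_fval hS _ e rfl

end NZ2


section NZ3
variable [NeZero n]

noncomputable def Wf (e : Deck n) : ℝ :=
  if _h0 : e = 0 then 0
  else sSup {x | ∃ p : Fin n → ℝ, IsDist p ∧ (∀ k, p k ≠ 0 → e k ≠ 0) ∧
    univ.inf' univ_nonempty p + ∑ k ∈ (suppF e).attach, p k.1 * Wf (e.sub k.1) = x}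
termination_by ∑ i, e i
decreasing_by
  have hk := mem_suppF.mp k.2
  have := sub_total hk
  omega

def WSet (e : Deck n) : Set ℝ := {x | ∃ p : Fin n → ℝ, IsDist p ∧ (∀ k, p k ≠ 0 → e k ≠ 0) ∧
    univ.inf' univ_nonempty p + ∑ k ∈ suppF e, p k * Wf (e.sub k) = x}

lemma Wf_zero : Wf (0 : Deck n) = 0 := by rw [Wf, dif_pos rfl]

lemma Wf_eq {e : Deck n} (h : e ≠ 0) : Wf e = sSup (WSet e) := by
  rw [Wf, dif_neg h]
  have hsa : ∀ p : Fin n → ℝ,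
      ∑ k ∈ (suppF e).attach, p k.1 * Wf (e.sub k.1) = ∑ k ∈ suppF e, p k * Wf (e.sub k) :=
    fun p => Finset.sum_attach (suppF e) (fun k => p k * Wf (e.sub k))
  congr 1
  ext x
  constructor
  · rintro ⟨p, h1, h2, h3⟩
    exact ⟨p, h1, h2, by rw [← h3, hsa]⟩
  · rintro ⟨p, h1, h2, h3⟩
    exact ⟨p, h1, h2, by rw [← h3, hsa]⟩

lemma WSet_nonempty {e : Deck n} (h : e ≠ 0) : (WSet e).Nonempty :=
  ⟨_, greedy e, (isShuffler_greedy e h).1, (isShuffler_greedy e h).2, rfl⟩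

lemma dist_single_le {p : Fin n → ℝ} (hp : IsDist p) (k0 : Fin n) : p k0 ≤ 1 := by
  rw [← hp.2]
  exact Finset.single_le_sum (fun i _ => hp.1 i) (mem_univ k0)

lemma Wf_le_total : ∀ (N : ℕ) (e : Deck n), ∑ i, e i = N → Wf e ≤ N := by
  intro N
  induction N using Nat.strong_induction_on with
  | _ N IH =>
    intro e hN
    by_cases h : e = 0
    · subst h; rw [Wf_zero]; positivity
    · obtain ⟨M, hM⟩ : ∃ M, N = M + 1 := ⟨N - 1, by have := total_pos h; omega⟩
      rw [Wf_eq h]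
      refine csSup_le (WSet_nonempty h) ?_
      rintro x ⟨p, hp, hsupp, rfl⟩
      have h1 : univ.inf' univ_nonempty p ≤ 1 :=
        (Finset.inf'_le _ (mem_univ (Classical.arbitrary _))).trans
          (dist_single_le hp _)
      have h2 : ∑ k ∈ suppF e, p k * Wf (e.sub k) ≤ (M : ℝ) := by
        calc ∑ k ∈ suppF e, p k * Wf (e.sub k) ≤ ∑ k ∈ suppF e, p k * M := by
              refine Finset.sum_le_sum fun k hk => ?_
              rw [mem_suppF] at hk
              have hlt : ∑ i, (e.sub k) i < N := by have := sub_total hk; omega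
              have hMk : ∑ i, (e.sub k) i = M := by have := sub_total hk; omega
              have := IH _ hlt (e.sub k) rfl
              rw [hMk] at this
              exact mul_le_mul_of_nonneg_left this (hp.1 k)
          _ = (∑ k ∈ suppF e, p k) * M := by rw [Finset.sum_mul]
          _ = M := by rw [dist_sum_supp hp hsupp, one_mul]
      have : (N : ℝ) = 1 + M := by rw [hM]; push_cast; ring
      rw [this]
      exact add_le_add h1 h2

lemma WSet_elt_le {e : Deck n} (h : e ≠ 0) {x : ℝ} (hx : x ∈ WSet e) :
    x ≤ ((∑ i, e i : ℕ) : ℝ) := by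
  obtain ⟨M, hM⟩ : ∃ M, ∑ i, e i = M + 1 :=
    ⟨(∑ i, e i) - 1, by have := total_pos h; omega⟩
  obtain ⟨p, hp, hsupp, rfl⟩ := hx
  have h1 : univ.inf' univ_nonempty p ≤ 1 :=
    (Finset.inf'_le _ (mem_univ (Classical.arbitrary _))).trans (dist_single_le hp _)
  have h2 : ∑ k ∈ suppF e, p k * Wf (e.sub k) ≤ (M : ℝ) := by
    calc ∑ k ∈ suppF e, p k * Wf (e.sub k) ≤ ∑ k ∈ suppF e, p k * M := by
          refine Finset.sum_le_sum fun k hk => ?_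
          rw [mem_suppF] at hk
          have hMk : ∑ i, (e.sub k) i = M := by have := sub_total hk; omega
          have := Wf_le_total M (e.sub k) hMk
          exact mul_le_mul_of_nonneg_left this (hp.1 k)
      _ = (∑ k ∈ suppF e, p k) * M := by rw [Finset.sum_mul]
      _ = M := by rw [dist_sum_supp hp hsupp, one_mul]
  have : ((∑ i, e i : ℕ) : ℝ) = 1 + M := by rw [hM]; push_cast; ring
  rw [this]
  exact add_le_add h1 h2

lemma WSet_bddAbove (e : Deck n) : BddAbove (WSet e) := by
  by_cases h : e = 0
  · subst h
    refine ⟨1, ?_⟩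
    rintro x ⟨p, hp, hsupp, rfl⟩
    have h1 : univ.inf' univ_nonempty p ≤ 1 :=
      (Finset.inf'_le _ (mem_univ (Classical.arbitrary _))).trans (dist_single_le hp _)
    have h2 : ∑ k ∈ suppF (0 : Deck n), p k * Wf ((0 : Deck n).sub k) = 0 := by
      apply Finset.sum_eq_zero
      intro k hk
      rw [mem_suppF] at hk
      simp at hk
    rw [h2]
    simpa using h1
  · exact ⟨_, fun x hx => WSet_elt_le h hx⟩

lemma Fval_le_Wf {S : Strat n} (hS : IsShuffler S) :
    ∀ (N : ℕ) (e : Deck n), ∑ i, e i = N → Fval S e ≤ Wf e := by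
  intro N
  induction N using Nat.strong_induction_on with
  | _ N IH =>
    intro e hN
    by_cases h : e = 0
    · subst h
      rw [Wf_zero, Fval_eq_wG hS, score_zero]
    · rw [Fval_eq_wG hS, score_rec _ _ h]
      have expand : ∑ j ∈ suppF e, S e j * (wG S e j + score (wG S) S (e.sub j)) =
          (∑ j ∈ suppF e, S e j * wG S e j) + ∑ j ∈ suppF e, S e j * score (wG S) S (e.sub j) := by
        rw [← Finset.sum_add_distrib]
        exact Finset.sum_congr rfl fun j _ => by ring
      rw [expand, wG_term hS h, argmin_eq_inf' S e]
      have step : univ.inf' univ_nonempty (S e) + ∑ j ∈ suppF e, S e j * score (wG S) S (e.sub j) ≤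
          univ.inf' univ_nonempty (S e) + ∑ j ∈ suppF e, S e j * Wf (e.sub j) := by
        refine add_le_add_right (Finset.sum_le_sum fun j hj => ?_) _
        rw [mem_suppF] at hj
        have hlt : ∑ i, (e.sub j) i < N := by have := sub_total hj; omega
        have h2 := IH _ hlt (e.sub j) rfl
        rw [Fval_eq_wG hS] at h2
        exact mul_le_mul_of_nonneg_left h2 ((hS e h).1.1 j)
      refine step.trans ?_
      rw [Wf_eq h]
      exact le_csSup (WSet_bddAbove e) ⟨S e, (hS e h).1, (hS e h).2, rfl⟩

open scoped Classical in
noncomputable def nearT (ε : ℝ) : Strat n := fun e =>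
  if h : ∃ p : Fin n → ℝ, IsDist p ∧ (∀ k, p k ≠ 0 → e k ≠ 0) ∧
      Wf e - ε < univ.inf' univ_nonempty p + ∑ k ∈ suppF e, p k * Wf (e.sub k)
  then h.choose else greedy e

lemma nearT_ex {ε : ℝ} (hε : 0 < ε) {e : Deck n} (h : e ≠ 0) :
    ∃ p : Fin n → ℝ, IsDist p ∧ (∀ k, p k ≠ 0 → e k ≠ 0) ∧
      Wf e - ε < univ.inf' univ_nonempty p + ∑ k ∈ suppF e, p k * Wf (e.sub k) := by
  have h1 : Wf e - ε < sSup (WSet e) := by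
    rw [← Wf_eq h]; linarith
  obtain ⟨x, ⟨p, hp, hsupp, rfl⟩, hlt⟩ := exists_lt_of_lt_csSup (WSet_nonempty h) h1
  exact ⟨p, hp, hsupp, hlt⟩

lemma nearT_spec {ε : ℝ} (hε : 0 < ε) {e : Deck n} (h : e ≠ 0) :
    IsDist (nearT ε e) ∧ (∀ k, nearT ε e k ≠ 0 → e k ≠ 0) ∧
      Wf e - ε < univ.inf' univ_nonempty (nearT ε e) +
        ∑ k ∈ suppF e, nearT ε e k * Wf (e.sub k) := by
  classical
  have hex := nearT_ex hε h
  unfold nearT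
  rw [dif_pos hex]
  exact hex.choose_spec

lemma isShuffler_nearT {ε : ℝ} (hε : 0 < ε) : IsShuffler (nearT (n := n) ε) := by
  intro e he
  obtain ⟨h1, h2, _⟩ := nearT_spec hε he
  exact ⟨h1, h2⟩

lemma Fval_nearT {ε : ℝ} (hε : 0 < ε) :
    ∀ (N : ℕ) (e : Deck n), ∑ i, e i = N → Wf e - ε * N ≤ Fval (nearT ε) e := by
  intro N
  induction N using Nat.strong_induction_on with
  | _ N IH =>
    intro e hN
    by_cases h : e = 0
    · subst h
      rw [Fval_eq_wG (isShuffler_nearT hε), score_zero, Wf_zero]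
      have : N = 0 := by rw [← hN]; simp
      subst this
      simp
    · obtain ⟨M, hM⟩ : ∃ M, N = M + 1 := ⟨N - 1, by have := total_pos h; omega⟩
      set S := nearT (n := n) ε with hSdef
      have hS : IsShuffler S := isShuffler_nearT hε
      obtain ⟨hdist, hsupp, hval⟩ := nearT_spec hε h
      rw [Fval_eq_wG hS, score_rec _ _ h]
      have expand : ∑ j ∈ suppF e, S e j * (wG S e j + score (wG S) S (e.sub j)) =
          (∑ j ∈ suppF e, S e j * wG S e j) + ∑ j ∈ suppF e, S e j * score (wG S) S (e.sub j) := by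
        rw [← Finset.sum_add_distrib]
        exact Finset.sum_congr rfl fun j _ => by ring
      rw [expand, wG_term hS h, argmin_eq_inf' S e]
      have step : ∑ j ∈ suppF e, S e j * (Wf (e.sub j) - ε * M) ≤
          ∑ j ∈ suppF e, S e j * score (wG S) S (e.sub j) := by
        refine Finset.sum_le_sum fun j hj => ?_
        rw [mem_suppF] at hj
        have hlt : ∑ i, (e.sub j) i < N := by have := sub_total hj; omega
        have hMj : ∑ i, (e.sub j) i = M := by have := sub_total hj; omega
        have h2 := IH _ hlt (e.sub j) rfl
        rw [Fval_eq_wG hS, hMj] at h2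
        exact mul_le_mul_of_nonneg_left h2 (hdist.1 j)
      have hsum1 : ∑ j ∈ suppF e, S e j = 1 := dist_sum_supp hdist hsupp
      have expand2 : ∑ j ∈ suppF e, S e j * (Wf (e.sub j) - ε * M) =
          (∑ j ∈ suppF e, S e j * Wf (e.sub j)) - ε * M := by
        have e1 : ∑ j ∈ suppF e, S e j * (Wf (e.sub j) - ε * M) =
            (∑ j ∈ suppF e, S e j * Wf (e.sub j)) -
              (∑ j ∈ suppF e, S e j) * (ε * M) := by
          rw [Finset.sum_mul, ← Finset.sum_sub_distrib]
          exact Finset.sum_congr rfl fun j _ => by ring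
        rw [e1, hsum1, one_mul]
      have hNc : (N : ℝ) = (M : ℝ) + 1 := by rw [hM]; push_cast; ring
      have final : Wf e - ε * N ≤
          univ.inf' univ_nonempty (S e) + ∑ j ∈ suppF e, S e j * (Wf (e.sub j) - ε * M) := by
        rw [expand2, hNc]
        nlinarith [hval]
      exact final.trans (add_le_add_right step _)

lemma Fopt_eq_Wf (e : Deck n) : Fopt e = Wf e := by
  have hbdd : BddAbove {x | ∃ S, IsShuffler S ∧ Fval S e = x} :=
    ⟨Wf e, by rintro x ⟨S, hS, rfl⟩; exact Fval_le_Wf hS _ e rfl⟩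
  refine le_antisymm ?_ ?_
  · refine csSup_le ⟨Fval greedy e, greedy, isShuffler_greedy, rfl⟩ ?_
    rintro x ⟨S, hS, rfl⟩
    exact Fval_le_Wf hS _ e rfl
  · by_cases h : e = 0
    · subst h
      have h0 : Fval greedy (0 : Deck n) = 0 := by
        rw [Fval_eq_wG isShuffler_greedy, score_zero]
      rw [Wf_zero]
      calc (0:ℝ) = Fval greedy 0 := h0.symm
        _ ≤ Fopt (0 : Deck n) := le_csSup hbdd ⟨greedy, isShuffler_greedy, rfl⟩
    · refine le_of_forall_pos_le_add fun ε hε => ?_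
      have hpos : (0:ℝ) < ((∑ i, e i : ℕ) : ℝ) := by exact_mod_cast total_pos h
      set ε' := ε / ((∑ i, e i : ℕ) : ℝ) with hε'def
      have hε' : 0 < ε' := div_pos hε hpos
      have h1 : Fval (nearT ε') e ≤ Fopt e :=
        le_csSup hbdd ⟨nearT ε', isShuffler_nearT hε', rfl⟩
      have h2 := Fval_nearT hε' (∑ i, e i) e rfl
      have h3 : ε' * ((∑ i, e i : ℕ) : ℝ) = ε := by
        rw [hε'def, div_mul_cancel₀ _ hpos.ne']
      have := h2.trans h1
      linarith
end NZ3


section NZ4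
variable [NeZero n]

lemma dist_comp_perm {q : Fin n → ℝ} (hq : IsDist q) (σ : Equiv.Perm (Fin n)) :
    IsDist (fun k => q (σ k)) :=
  ⟨fun k => hq.1 _, by rw [Equiv.sum_comp σ q]; exact hq.2⟩

lemma sup'_comp_perm (q : Fin n → ℝ) (σ : Equiv.Perm (Fin n)) :
    univ.sup' univ_nonempty (fun k => q (σ k)) = univ.sup' univ_nonempty q := by
  apply le_antisymm
  · exact Finset.sup'_le _ _ fun k _ => Finset.le_sup' q (mem_univ (σ k))
  · apply Finset.sup'_le
    intro k _
    calc q k = q (σ (σ⁻¹ k)) := by simp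
      _ ≤ univ.sup' univ_nonempty (fun k => q (σ k)) :=
          Finset.le_sup' (fun k => q (σ k)) (mem_univ (σ⁻¹ k))

lemma inf'_comp_perm (q : Fin n → ℝ) (σ : Equiv.Perm (Fin n)) :
    univ.inf' univ_nonempty (fun k => q (σ k)) = univ.inf' univ_nonempty q := by
  apply le_antisymm
  · apply Finset.le_inf'
    intro k _
    calc univ.inf' univ_nonempty (fun k => q (σ k)) ≤ q (σ (σ⁻¹ k)) :=
          Finset.inf'_le (fun k => q (σ k)) (mem_univ (σ⁻¹ k))
      _ = q k := by simp
  · exact Finset.le_inf' _ _ fun k _ => Finset.inf'_le q (mem_univ (σ k))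

lemma sum_suppF_eq {e : Deck n} {p : Fin n → ℝ} (hsupp : ∀ k, p k ≠ 0 → e k ≠ 0)
    (f : Fin n → ℝ) : ∑ k ∈ suppF e, p k * f k = ∑ k, p k * f k := by
  apply Finset.sum_subset (Finset.subset_univ _)
  intro k _ hk
  rw [mem_suppF] at hk
  push_neg at hk
  have : p k = 0 := by
    by_contra hc
    exact (hsupp k hc) hk
  rw [this, zero_mul]

lemma comp_sub (e : Deck n) (σ : Equiv.Perm (Fin n)) (m : Fin n) :
    Deck.sub (fun k => e (σ k)) m = fun k => (e.sub (σ m)) (σ k) := by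
  funext l
  simp only [Deck.sub]
  by_cases hl : l = m
  · subst hl; simp
  · rw [if_neg hl, if_neg (fun h => hl (σ.injective h))]

lemma comp_ne_zero {e : Deck n} (h : e ≠ 0) (σ : Equiv.Perm (Fin n)) :
    (fun k => e (σ k)) ≠ (0 : Deck n) := by
  obtain ⟨m, hm⟩ := deck_ne_zero_iff.mp h
  refine deck_ne_zero_iff.mpr ⟨σ⁻¹ m, ?_⟩
  simpa using hm

lemma comp_total (e : Deck n) (σ : Equiv.Perm (Fin n)) :
    ∑ k, e (σ k) = ∑ k, e k := Equiv.sum_comp σ e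

lemma Vf_perm : ∀ (N : ℕ) (e : Deck n) (σ : Equiv.Perm (Fin n)), ∑ i, e i = N →
    Vf (fun k => e (σ k)) = Vf e := by
  intro N
  induction N using Nat.strong_induction_on with
  | _ N IH =>
    have aux : ∀ (e : Deck n) (σ : Equiv.Perm (Fin n)), ∑ i, e i = N →
        Vf (fun k => e (σ k)) ≤ Vf e := by
      intro e σ hN
      by_cases h : e = 0
      · subst h
        have h0 : (fun k => (0 : Deck n) (σ k)) = (0 : Deck n) := rfl
        rw [h0]
      · have heσ : (fun k => e (σ k)) ≠ (0 : Deck n) := comp_ne_zero h σ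
        rw [Vf_eq h]
        refine le_csInf (VSet_nonempty h) ?_
        rintro x ⟨q, hq, hqs, rfl⟩
        set p := fun k => q (σ k) with hp
        have hpd : IsDist p := dist_comp_perm hq σ
        have hps : ∀ k, p k ≠ 0 → (fun k => e (σ k)) k ≠ 0 := fun k hk => hqs (σ k) hk
        have mem : univ.sup' univ_nonempty p +
            ∑ k ∈ suppF (fun k => e (σ k)), p k * Vf (Deck.sub (fun k => e (σ k)) k) ∈
              VSet (fun k => e (σ k)) := ⟨p, hpd, hps, rfl⟩
        have h1 := csInf_le (VSet_bddBelow _) mem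
        rw [← Vf_eq heσ] at h1
        refine h1.trans (le_of_eq ?_)
        congr 1
        · exact sup'_comp_perm q σ
        · rw [sum_suppF_eq hps, sum_suppF_eq hqs]
          have step : ∀ k, p k * Vf (Deck.sub (fun k => e (σ k)) k) =
              q (σ k) * Vf (e.sub (σ k)) := by
            intro k
            by_cases hk : p k = 0
            · rw [hk]
              have : q (σ k) = 0 := hk
              rw [this, zero_mul, zero_mul]
            · have hek : e (σ k) ≠ 0 := hqs (σ k) hk
              have hlt : ∑ i, (e.sub (σ k)) i < N := by
                have := sub_total hek; omega
              rw [comp_sub e σ k, IH _ hlt (e.sub (σ k)) σ rfl]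
          rw [Finset.sum_congr rfl fun k _ => step k]
          exact Equiv.sum_comp σ (fun m => q m * Vf (e.sub m))
    intro e σ hN
    refine le_antisymm (aux e σ hN) ?_
    have h2 := aux (fun k => e (σ k)) σ⁻¹ (by rw [comp_total e σ]; exact hN)
    have h3 : (fun k => (fun k' => e (σ k')) (σ⁻¹ k)) = e :=
      funext fun k => by simp
    rwa [h3] at h2

lemma Wf_perm : ∀ (N : ℕ) (e : Deck n) (σ : Equiv.Perm (Fin n)), ∑ i, e i = N →
    Wf (fun k => e (σ k)) = Wf e := by
  intro N
  induction N using Nat.strong_induction_on with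
  | _ N IH =>
    have aux : ∀ (e : Deck n) (σ : Equiv.Perm (Fin n)), ∑ i, e i = N →
        Wf e ≤ Wf (fun k => e (σ k)) := by
      intro e σ hN
      by_cases h : e = 0
      · subst h
        have h0 : (fun k => (0 : Deck n) (σ k)) = (0 : Deck n) := rfl
        rw [h0]
      · have heσ : (fun k => e (σ k)) ≠ (0 : Deck n) := comp_ne_zero h σ
        rw [Wf_eq h]
        refine csSup_le (WSet_nonempty h) ?_
        rintro x ⟨q, hq, hqs, rfl⟩
        set p := fun k => q (σ k) with hp
        have hpd : IsDist p := dist_comp_perm hq σ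
        have hps : ∀ k, p k ≠ 0 → (fun k => e (σ k)) k ≠ 0 := fun k hk => hqs (σ k) hk
        have mem : univ.inf' univ_nonempty p +
            ∑ k ∈ suppF (fun k => e (σ k)), p k * Wf (Deck.sub (fun k => e (σ k)) k) ∈
              WSet (fun k => e (σ k)) := ⟨p, hpd, hps, rfl⟩
        have h1 := le_csSup (WSet_bddAbove _) mem
        rw [← Wf_eq heσ] at h1
        refine le_trans (le_of_eq ?_) h1
        congr 1
        · exact (inf'_comp_perm q σ).symm
        · rw [sum_suppF_eq hps, sum_suppF_eq hqs]
          have step : ∀ k, p k * Wf (Deck.sub (fun k => e (σ k)) k) =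
              q (σ k) * Wf (e.sub (σ k)) := by
            intro k
            by_cases hk : p k = 0
            · rw [hk]
              have : q (σ k) = 0 := hk
              rw [this, zero_mul, zero_mul]
            · have hek : e (σ k) ≠ 0 := hqs (σ k) hk
              have hlt : ∑ i, (e.sub (σ k)) i < N := by
                have := sub_total hek; omega
              rw [comp_sub e σ k, IH _ hlt (e.sub (σ k)) σ rfl]
          rw [Finset.sum_congr rfl fun k _ => step k]
          exact (Equiv.sum_comp σ (fun m => q m * Wf (e.sub m))).symm
    intro e σ hN
    refine le_antisymm ?_ (aux e σ hN)
    have h2 := aux (fun k => e (σ k)) σ⁻¹ (by rw [comp_total e σ]; exact hN)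
    have h3 : (fun k => (fun k' => e (σ k')) (σ⁻¹ k)) = e :=
      funext fun k => by simp
    rwa [h3] at h2

end NZ4


def swapd (b : Deck n) (i j : Fin n) : Deck n :=
  fun k => if k = i then b i - 1 else if k = j then b j + 1 else b k

section swapid
variable {b : Deck n} {i j : Fin n}

lemma swapd_i : swapd b i j i = b i - 1 := by simp [swapd]

lemma swapd_j (hij : i ≠ j) : swapd b i j j = b j + 1 := by
  simp [swapd, Ne.symm hij]

lemma swapd_other {k : Fin n} (h1 : k ≠ i) (h2 : k ≠ j) : swapd b i j k = b k := by
  simp [swapd, h1, h2]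

lemma swapd_sub_j (hij : i ≠ j) : (swapd b i j).sub j = b.sub i := by
  funext k
  by_cases h1 : k = i
  · subst h1
    simp [Deck.sub, swapd, hij]
  · by_cases h2 : k = j
    · subst h2
      simp [Deck.sub, swapd, Ne.symm hij]
    · simp [Deck.sub, swapd, h1, h2]

lemma swapd_sub_i (hij : i ≠ j) : (swapd b i j).sub i = swapd (b.sub i) i j := by
  funext k
  by_cases h1 : k = i
  · subst h1
    simp [Deck.sub, swapd]
  · by_cases h2 : k = j
    · subst h2
      simp [Deck.sub, swapd, Ne.symm hij, hij]
    · simp [Deck.sub, swapd, h1, h2]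

lemma swapd_sub_j' (hij : i ≠ j) (hbj : b j ≠ 0) : swapd (b.sub j) i j = b.sub i := by
  funext k
  by_cases h1 : k = i
  · subst h1
    simp [Deck.sub, swapd, hij]
  · by_cases h2 : k = j
    · subst h2
      rw [swapd_j hij]
      simp [Deck.sub, Ne.symm hij]
      omega
    · simp [Deck.sub, swapd, h1, h2]

lemma swapd_sub_m (hij : i ≠ j) {m : Fin n} (hmi : m ≠ i) (hmj : m ≠ j) :
    (swapd b i j).sub m = swapd (b.sub m) i j := by
  funext k
  by_cases h1 : k = i
  · subst h1
    simp [Deck.sub, swapd, Ne.symm hmi, hij]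
  · by_cases h2 : k = j
    · subst h2
      simp [Deck.sub, swapd, Ne.symm hmj, Ne.symm hij]
    · by_cases h3 : k = m
      · subst h3
        simp [Deck.sub, swapd, h1, h2]
      · simp [Deck.sub, swapd, h1, h2, h3]

lemma swapd_eq_comp (hij : i ≠ j) (hc : b i = b j + 1) :
    swapd b i j = fun k => b (Equiv.swap i j k) := by
  funext k
  by_cases h1 : k = i
  · subst h1
    rw [swapd_i, Equiv.swap_apply_left]
    omega
  · by_cases h2 : k = j
    · subst h2
      rw [swapd_j hij, Equiv.swap_apply_right]
      omega
    · rw [swapd_other h1 h2, Equiv.swap_apply_of_ne_of_ne h1 h2]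

lemma swapd_total (hij : i ≠ j) (hbi : b i ≠ 0) :
    ∑ k, swapd b i j k = ∑ k, b k := by
  have hdecomp : ∀ k, swapd b i j k = (b.sub i) k + (if k = j then 1 else 0) := by
    intro k
    by_cases h1 : k = i
    · subst h1
      simp [Deck.sub, swapd, hij]
    · by_cases h2 : k = j
      · subst h2
        simp [Deck.sub, swapd, Ne.symm hij]
      · simp [Deck.sub, swapd, h1, h2]
  rw [Finset.sum_congr rfl fun k _ => hdecomp k, Finset.sum_add_distrib]
  have h3 : ∑ k, (if k = j then (1:ℕ) else 0) = 1 := by simp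
  have h4 := sub_total (e := b) (j := i) hbi
  omega

end swapid

section NZ5
variable [NeZero n]

lemma Vf_swap_le : ∀ (N : ℕ) (b : Deck n) (i j : Fin n), ∑ k, b k = N → b j < b i →
    Vf (swapd b i j) ≤ Vf b := by
  intro N
  induction N using Nat.strong_induction_on with
  | _ N IH =>
    intro b i j hN hlt
    have hij : i ≠ j := fun h => by subst h; exact lt_irrefl _ hlt
    have hbi : b i ≠ 0 := by omega
    have hb0 : b ≠ 0 := deck_ne_zero_iff.mpr ⟨i, hbi⟩
    by_cases hc : b i = b j + 1
    · rw [swapd_eq_comp hij hc]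
      exact le_of_eq (Vf_perm N b (Equiv.swap i j) hN)
    · have hc2 : b j + 1 < b i := by omega
      have ha0 : swapd b i j ≠ 0 :=
        deck_ne_zero_iff.mpr ⟨j, by rw [swapd_j hij]; omega⟩
      rw [Vf_eq hb0]
      refine le_csInf (VSet_nonempty hb0) ?_
      rintro x ⟨q, hq, hqs, rfl⟩
      set τ := Equiv.swap i j with hτ
      set p := fun k => q (τ k) with hp
      have hpd : IsDist p := dist_comp_perm hq τ
      have hps : ∀ k, p k ≠ 0 → swapd b i j k ≠ 0 := by
        intro k hk
        by_cases h1 : k = i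
        · subst h1
          rw [swapd_i]; omega
        · by_cases h2 : k = j
          · subst h2
            rw [swapd_j hij]; omega
          · have hτk : τ k = k := Equiv.swap_apply_of_ne_of_ne h1 h2
            have hqk : q k ≠ 0 := by
              have : p k = q k := by rw [hp]; simp only; rw [hτk]
              rwa [this] at hk
            rw [swapd_other h1 h2]
            exact hqs k hqk
      have mem : univ.sup' univ_nonempty p +
          ∑ k ∈ suppF (swapd b i j), p k * Vf ((swapd b i j).sub k) ∈ VSet (swapd b i j) :=
        ⟨p, hpd, hps, rfl⟩
      have h1 := csInf_le (VSet_bddBelow _) mem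
      rw [← Vf_eq ha0] at h1
      refine h1.trans ?_
      have hsup : univ.sup' univ_nonempty p = univ.sup' univ_nonempty q := sup'_comp_perm q τ
      rw [hsup]
      refine add_le_add_right ?_ _
      rw [sum_suppF_eq hps, sum_suppF_eq hqs]
      have reindex : ∑ k, p k * Vf ((swapd b i j).sub k) =
          ∑ k, q k * Vf ((swapd b i j).sub (τ k)) := by
        conv_lhs => rw [← Equiv.sum_comp τ (fun k => p k * Vf ((swapd b i j).sub k))]
        refine Finset.sum_congr rfl fun k _ => ?_
        congr 1
        show q (τ (τ k)) = q k
        rw [hτ, Equiv.swap_apply_self]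
      rw [reindex]
      refine Finset.sum_le_sum fun k _ => ?_
      by_cases hqk : q k = 0
      · rw [hqk, zero_mul, zero_mul]
      · refine mul_le_mul_of_nonneg_left ?_ (hq.1 k)
        have hbk : b k ≠ 0 := hqs k hqk
        by_cases h1 : k = i
        · rw [h1]
          have hτi : τ i = j := Equiv.swap_apply_left i j
          rw [hτi, swapd_sub_j hij]
        · by_cases h2 : k = j
          · rw [h2] at hbk ⊢
            have hτj : τ j = i := Equiv.swap_apply_right i j
            rw [hτj, swapd_sub_i hij]
            have hlt1 : ∑ k2, (b.sub i) k2 < N := by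
              have := sub_total (e := b) (j := i) hbi; omega
            have hsubi_i : (b.sub i) i = b i - 1 := by simp [Deck.sub]
            have hsubi_j : (b.sub i) j = b j := by simp [Deck.sub, Ne.symm hij]
            have s1 : Vf (swapd (b.sub i) i j) ≤ Vf (b.sub i) := by
              refine IH _ hlt1 (b.sub i) i j rfl ?_
              rw [hsubi_i, hsubi_j]; omega
            have hltj : ∑ k2, (b.sub j) k2 < N := by
              have := sub_total (e := b) (j := j) hbk; omega
            have s2 : Vf (b.sub i) ≤ Vf (b.sub j) := by
              have e1 : (b.sub j) j = b j - 1 := by simp [Deck.sub]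
              have e2 : (b.sub j) i = b i := by simp [Deck.sub, hij]
              have h5 := IH _ hltj (b.sub j) i j rfl (by rw [e1, e2]; omega)
              rwa [swapd_sub_j' hij hbk] at h5
            exact s1.trans s2
          · have hτk : τ k = k := Equiv.swap_apply_of_ne_of_ne h1 h2
            rw [hτk, swapd_sub_m hij h1 h2]
            have hltk : ∑ k2, (b.sub k) k2 < N := by
              have := sub_total (e := b) (j := k) hbk; omega
            have e1 : (b.sub k) j = b j := by simp [Deck.sub, Ne.symm h2]
            have e2 : (b.sub k) i = b i := by simp [Deck.sub, Ne.symm h1]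
            exact IH _ hltk (b.sub k) i j rfl (by rw [e1, e2]; omega)

lemma Wf_swap_ge : ∀ (N : ℕ) (b : Deck n) (i j : Fin n), ∑ k, b k = N → b j < b i →
    Wf b ≤ Wf (swapd b i j) := by
  intro N
  induction N using Nat.strong_induction_on with
  | _ N IH =>
    intro b i j hN hlt
    have hij : i ≠ j := fun h => by subst h; exact lt_irrefl _ hlt
    have hbi : b i ≠ 0 := by omega
    have hb0 : b ≠ 0 := deck_ne_zero_iff.mpr ⟨i, hbi⟩
    by_cases hc : b i = b j + 1
    · rw [swapd_eq_comp hij hc]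
      exact le_of_eq (Wf_perm N b (Equiv.swap i j) hN).symm
    · have hc2 : b j + 1 < b i := by omega
      have ha0 : swapd b i j ≠ 0 :=
        deck_ne_zero_iff.mpr ⟨j, by rw [swapd_j hij]; omega⟩
      rw [Wf_eq hb0]
      refine csSup_le (WSet_nonempty hb0) ?_
      rintro x ⟨q, hq, hqs, rfl⟩
      set τ := Equiv.swap i j with hτ
      set p := fun k => q (τ k) with hp
      have hpd : IsDist p := dist_comp_perm hq τ
      have hps : ∀ k, p k ≠ 0 → swapd b i j k ≠ 0 := by
        intro k hk
        by_cases h1 : k = i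
        · subst h1
          rw [swapd_i]; omega
        · by_cases h2 : k = j
          · subst h2
            rw [swapd_j hij]; omega
          · have hτk : τ k = k := Equiv.swap_apply_of_ne_of_ne h1 h2
            have hqk : q k ≠ 0 := by
              have : p k = q k := by rw [hp]; simp only; rw [hτk]
              rwa [this] at hk
            rw [swapd_other h1 h2]
            exact hqs k hqk
      have mem : univ.inf' univ_nonempty p +
          ∑ k ∈ suppF (swapd b i j), p k * Wf ((swapd b i j).sub k) ∈ WSet (swapd b i j) :=
        ⟨p, hpd, hps, rfl⟩
      have h1 := le_csSup (WSet_bddAbove _) mem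
      rw [← Wf_eq ha0] at h1
      refine le_trans ?_ h1
      have hinf : univ.inf' univ_nonempty p = univ.inf' univ_nonempty q := inf'_comp_perm q τ
      rw [hinf]
      refine add_le_add_right ?_ _
      rw [sum_suppF_eq hps, sum_suppF_eq hqs]
      have reindex : ∑ k, p k * Wf ((swapd b i j).sub k) =
          ∑ k, q k * Wf ((swapd b i j).sub (τ k)) := by
        conv_lhs => rw [← Equiv.sum_comp τ (fun k => p k * Wf ((swapd b i j).sub k))]
        refine Finset.sum_congr rfl fun k _ => ?_
        congr 1
        show q (τ (τ k)) = q k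
        rw [hτ, Equiv.swap_apply_self]
      rw [reindex]
      refine Finset.sum_le_sum fun k _ => ?_
      by_cases hqk : q k = 0
      · rw [hqk, zero_mul, zero_mul]
      · refine mul_le_mul_of_nonneg_left ?_ (hq.1 k)
        have hbk : b k ≠ 0 := hqs k hqk
        by_cases h1 : k = i
        · rw [h1]
          have hτi : τ i = j := Equiv.swap_apply_left i j
          rw [hτi, swapd_sub_j hij]
        · by_cases h2 : k = j
          · rw [h2] at hbk ⊢
            have hτj : τ j = i := Equiv.swap_apply_right i j
            rw [hτj, swapd_sub_i hij]
            have hlt1 : ∑ k2, (b.sub i) k2 < N := by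
              have := sub_total (e := b) (j := i) hbi; omega
            have hsubi_i : (b.sub i) i = b i - 1 := by simp [Deck.sub]
            have hsubi_j : (b.sub i) j = b j := by simp [Deck.sub, Ne.symm hij]
            have s1 : Wf (b.sub i) ≤ Wf (swapd (b.sub i) i j) := by
              refine IH _ hlt1 (b.sub i) i j rfl ?_
              rw [hsubi_i, hsubi_j]; omega
            have hltj : ∑ k2, (b.sub j) k2 < N := by
              have := sub_total (e := b) (j := j) hbk; omega
            have s2 : Wf (b.sub j) ≤ Wf (b.sub i) := by
              have e1 : (b.sub j) j = b j - 1 := by simp [Deck.sub]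
              have e2 : (b.sub j) i = b i := by simp [Deck.sub, hij]
              have h5 := IH _ hltj (b.sub j) i j rfl (by rw [e1, e2]; omega)
              rwa [swapd_sub_j' hij hbk] at h5
            exact s2.trans s1
          · have hτk : τ k = k := Equiv.swap_apply_of_ne_of_ne h1 h2
            rw [hτk, swapd_sub_m hij h1 h2]
            have hltk : ∑ k2, (b.sub k) k2 < N := by
              have := sub_total (e := b) (j := k) hbk; omega
            have e1 : (b.sub k) j = b j := by simp [Deck.sub, Ne.symm h2]
            have e2 : (b.sub k) i = b i := by simp [Deck.sub, Ne.symm h1]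
            exact IH _ hltk (b.sub k) i j rfl (by rw [e1, e2]; omega)

end NZ5

end CG

/-- if `d_i ≥ d_j > 0` then `f(d-δ_i) ≤ f(d-δ_j)` and `F(d-δ_i) ≥ F(d-δ_j)`. -/
theorem stmt4 {n : ℕ} (d : Deck n) (i j : Fin n) (hij : d j ≤ d i) (hj : 0 < d j) :
    fopt (d.sub i) ≤ fopt (d.sub j) ∧ Fopt (d.sub j) ≤ Fopt (d.sub i) := by
  haveI : NeZero n := ⟨fun h => (h ▸ j).elim0⟩
  by_cases hij2 : i = j
  · subst hij2
    exact ⟨le_rfl, le_rfl⟩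
  · have e1 : (d.sub j) j = d j - 1 := by simp [Deck.sub]
    have e2 : (d.sub j) i = d i := by simp [Deck.sub, hij2]
    have key : d.sub i = CG.swapd (d.sub j) i j := by
      funext k
      by_cases h1 : k = i
      · subst h1
        rw [CG.swapd_i, e2]
        simp [Deck.sub]
      · by_cases h2 : k = j
        · subst h2
          rw [CG.swapd_j hij2, e1]
          simp only [Deck.sub, if_neg h1]
          omega
        · rw [CG.swapd_other h1 h2]
          simp [Deck.sub, h1, h2]
    have hlt : (d.sub j) j < (d.sub j) i := by rw [e1, e2]; omega
    constructor
    · rw [CG.fopt_eq_Vf, CG.fopt_eq_Vf, key]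
      exact CG.Vf_swap_le _ (d.sub j) i j rfl hlt
    · rw [CG.Fopt_eq_Wf, CG.Fopt_eq_Wf, key]
      exact CG.Wf_swap_ge _ (d.sub j) i j rfl hlt
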